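/- Let (S, τ) be a semi-frame for a ring R, let (S', τ') be a semi-frame for a ring R', and let φ : S → S' be a homomorphism of graded rings with τ' ∘ φ = φ ∘ τ, so that φ induces a ring homomorphism R → R'; assume R → R' is faithfully flat. Let 0 → M → N → P → 0 be a complex of finite projective graded S-modules (with morphisms graded S-module homomorphisms and all composites zero). Then the complex is exact if and only if its base change 0 → M ⊗_S S' → N ⊗_S S' → P ⊗_S S' → 0 along φ is exact. -/

import Mathlib

universe u v

/-- A *semi-frame* `(S, τ)`: `S = ⨁ₙ Sₙ` a ℤ-graded commutative ring together with a
ring homomorphism `τ : S → S₀` (formalized as a ring endomorphism landing in `𝒜 0`)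
such that `τ` is the identity on `S₀`, a bijection `S₋ₙ → S₀` for every `n ≥ 1`, and
`τ(S₁)` is contained in the Jacobson radical of `S₀`. -/
structure SemiFrame {A : Type*} [CommRing A] (𝒜 : ℤ → AddSubgroup A)
    [GradedRing 𝒜] where
  tau : A →+* A
  tau_mem_zero : ∀ a : A, tau a ∈ 𝒜 0
  tau_id_zero : ∀ a ∈ 𝒜 0, tau a = a
  tau_inj_neg : ∀ n : ℕ, 1 ≤ n → ∀ a ∈ 𝒜 (-(n : ℤ)), ∀ b ∈ 𝒜 (-(n : ℤ)),
    tau a = tau b → a = b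
  tau_surj_neg : ∀ n : ℕ, 1 ≤ n → ∀ c ∈ 𝒜 0, ∃ a ∈ 𝒜 (-(n : ℤ)), tau a = c
  tau_S1_rad : ∀ s ∈ 𝒜 1, ∀ y ∈ 𝒜 0, ∃ z ∈ 𝒜 0, (1 - tau s * y) * z = 1

/-- The kernel of `ν : S → R = S₀/τ(S₁)` (the projection `S₀ → R` in degree `0`,
zero in other degrees): the ideal generated by the homogeneous elements of nonzero
degree together with `τ(S₁)`; thus `R = S ⧸ kerNu`. -/
def kerNu {A : Type*} [CommRing A] (𝒜 : ℤ → AddSubgroup A) [GradedRing 𝒜]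
    (τ : A →+* A) : Ideal A :=
  Ideal.span ((⋃ (n : ℤ) (_ : n ≠ 0), (𝒜 n : Set A)) ∪ (τ '' (𝒜 1 : Set A)))

section Jset

variable {A : Type*} [CommRing A] (𝒜 : ℤ → AddSubgroup A) [GradedRing 𝒜]

/-- The "quasi-regular" elements relative to degree 0: a Jacobson-radical style set. -/
def Jset : Set A := {a | ∀ y ∈ 𝒜 0, ∃ z ∈ 𝒜 0, (1 - a * y) * z = 1}

variable {𝒜}

lemma jset_zero : (0 : A) ∈ Jset 𝒜 := by
  intro y hy
  exact ⟨1, SetLike.one_mem_graded 𝒜, by ring⟩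

lemma jset_add {a b : A} (ha : a ∈ Jset 𝒜) (hb : b ∈ Jset 𝒜) : a + b ∈ Jset 𝒜 := by
  intro y hy
  obtain ⟨z₁, hz₁, e₁⟩ := ha y hy
  have hyz₁ : y * z₁ ∈ 𝒜 0 := by
    simpa using SetLike.mul_mem_graded hy hz₁
  obtain ⟨z₂, hz₂, e₂⟩ := hb (y * z₁) hyz₁
  refine ⟨z₁ * z₂, by simpa using SetLike.mul_mem_graded hz₁ hz₂, ?_⟩
  linear_combination z₂ * e₁ + e₂

lemma jset_mul {c a : A} (hc : c ∈ 𝒜 0) (ha : a ∈ Jset 𝒜) : c * a ∈ Jset 𝒜 := by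
  intro y hy
  have hcy : c * y ∈ 𝒜 0 := by simpa using SetLike.mul_mem_graded hc hy
  obtain ⟨z, hz, e⟩ := ha (c * y) hcy
  exact ⟨z, hz, by linear_combination e⟩

lemma jset_tau_one (SF : SemiFrame 𝒜) {s : A} (hs : s ∈ 𝒜 1) : SF.tau s ∈ Jset 𝒜 :=
  SF.tau_S1_rad s hs

lemma upow_mem {u : A} (hu : u ∈ 𝒜 (-1)) (k : ℕ) : u ^ k ∈ 𝒜 (-(k : ℤ)) := by
  induction k with
  | zero => simpa using SetLike.one_mem_graded 𝒜
  | succ n ih =>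
      have := SetLike.mul_mem_graded ih hu
      rw [pow_succ]
      convert this using 2
      push_cast; ring

lemma jset_tau_pos (SF : SemiFrame 𝒜) {n : ℤ} (hn : 0 < n) {v : A} (hv : v ∈ 𝒜 n) : SF.tau v ∈ Jset 𝒜 := by
  obtain ⟨u, hu, hu1⟩ := SF.tau_surj_neg 1 le_rfl 1 (SetLike.one_mem_graded 𝒜)
  have hu' : u ∈ 𝒜 (-1) := by simpa using hu
  set k : ℕ := (n - 1).toNat with hk
  have hkz : (k : ℤ) = n - 1 := Int.toNat_of_nonneg (by omega)
  have hs : u ^ k * v ∈ 𝒜 1 := by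
    have := SetLike.mul_mem_graded (upow_mem hu' k) hv
    convert this using 2
    omega
  have htau : SF.tau (u ^ k * v) = SF.tau v := by
    rw [map_mul, map_pow, hu1, one_pow, one_mul]
  have := jset_tau_one SF hs
  rwa [htau] at this

lemma jset_opp (SF : SemiFrame 𝒜) {m : ℤ} (hm : m ≠ 0) {v w : A} (hv : v ∈ 𝒜 m) (hw : w ∈ 𝒜 (-m)) :
    v * w ∈ Jset 𝒜 := by
  have h0 : v * w ∈ 𝒜 0 := by
    simpa using SetLike.mul_mem_graded hv hw
  have he : v * w = SF.tau v * SF.tau w := by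
    rw [← map_mul]; exact (SF.tau_id_zero _ h0).symm
  rcases lt_or_gt_of_ne hm with h | h
  · -- m < 0 : use w ∈ 𝒜 (-m), -m > 0
    have : SF.tau w ∈ Jset 𝒜 := jset_tau_pos SF (by omega) hw
    rw [he]
    exact jset_mul (SF.tau_mem_zero v) this
  · have : SF.tau v ∈ Jset 𝒜 := jset_tau_pos SF h hv
    rw [he, mul_comm]
    exact jset_mul (SF.tau_mem_zero w) this

end Jset

section KerNu

variable {A : Type*} [CommRing A] {𝒜 : ℤ → AddSubgroup A} [GradedRing 𝒜]

open DirectSum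

lemma decompose_coe_add (x y : A) (k : ℤ) :
    ((decompose 𝒜 (x + y) k : A)) = (decompose 𝒜 x k : A) + (decompose 𝒜 y k : A) := by
  rw [DirectSum.decompose_add, DirectSum.add_apply]
  rfl

lemma decompose_mul_homog {m : ℤ} {c : A} (hc : c ∈ 𝒜 m) (b : A) (k : ℤ) :
    (decompose 𝒜 (c * b) k : A) = c * (decompose 𝒜 b (k - m) : A) := by
  induction b using DirectSum.Decomposition.inductionOn 𝒜 with
  | zero => simp
  | homogeneous x =>
      rename_i j
      obtain ⟨x, hx⟩ := x
      simp only []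
      have hcx : c * x ∈ 𝒜 (m + j) := SetLike.mul_mem_graded hc hx
      by_cases h : k = m + j
      · rw [DirectSum.decompose_of_mem_same 𝒜 (show c * x ∈ 𝒜 k from h ▸ hcx),
          DirectSum.decompose_of_mem_same 𝒜 (show x ∈ 𝒜 (k - m) from by
            rw [show k - m = j by omega]; exact hx)]
      · rw [DirectSum.decompose_of_mem_ne 𝒜 hcx (by omega),
          DirectSum.decompose_of_mem_ne 𝒜 hx (show j ≠ k - m by omega), mul_zero]
  | add x y hx hy =>
      rw [mul_add, decompose_coe_add, decompose_coe_add, hx, hy, mul_add]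

lemma kerNu_isHomogeneous (SF : SemiFrame 𝒜) :
    Ideal.IsHomogeneous 𝒜 (kerNu 𝒜 SF.tau) := by
  apply Ideal.homogeneous_span
  rintro x (hx | hx)
  · simp only [Set.mem_iUnion] at hx
    obtain ⟨n, _, hn⟩ := hx
    exact ⟨n, hn⟩
  · obtain ⟨s, _, rfl⟩ := hx
    exact ⟨0, SF.tau_mem_zero s⟩

lemma kerNu_proj_zero_jset (SF : SemiFrame 𝒜) :
    ∀ b ∈ kerNu 𝒜 SF.tau, (decompose 𝒜 b 0 : A) ∈ Jset 𝒜 := by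
  intro b hb
  refine Submodule.span_induction ?_ ?_ ?_ ?_ hb
  · rintro x (hx | hx)
    · simp only [Set.mem_iUnion] at hx
      obtain ⟨n, hn, hx⟩ := hx
      rw [DirectSum.decompose_of_mem_ne 𝒜 hx hn]
      exact jset_zero
    · obtain ⟨s, hs, rfl⟩ := hx
      rw [DirectSum.decompose_of_mem_same 𝒜 (SF.tau_mem_zero s)]
      exact jset_tau_one SF hs
  · simp only [DirectSum.decompose_zero]
    simpa using jset_zero
  · intro x y _ _ hx hy
    rw [decompose_coe_add]
    exact jset_add hx hy
  · intro c x _ hx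
    rw [smul_eq_mul]
    induction c using DirectSum.Decomposition.inductionOn 𝒜 with
    | zero => simpa using jset_zero
    | homogeneous cc =>
        rename_i m
        obtain ⟨c, hc⟩ := cc
        simp only []
        rw [decompose_mul_homog hc, zero_sub]
        by_cases hm : m = 0
        · subst hm
          rw [neg_zero]
          exact jset_mul hc hx
        · exact jset_opp SF hm hc (SetLike.coe_mem _)
    | add c₁ c₂ h₁ h₂ =>
        rw [add_mul, decompose_coe_add]
        exact jset_add h₁ h₂

lemma kerNu_one_sub_unit (SF : SemiFrame 𝒜) {b : A} (hb : b ∈ kerNu 𝒜 SF.tau)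
    (hb0 : b ∈ 𝒜 0) : ∃ z : A, (1 - b) * z = 1 := by
  have h := kerNu_proj_zero_jset SF b hb
  rw [DirectSum.decompose_of_mem_same 𝒜 hb0] at h
  obtain ⟨z, _, hz⟩ := h 1 (SetLike.one_mem_graded 𝒜)
  exact ⟨z, by linear_combination hz⟩

end KerNu

section ModuleGrading

open DirectSum

variable {A : Type*} [CommRing A] {𝒜 : ℤ → AddSubgroup A} [GradedRing 𝒜]
variable {M : Type*} [AddCommGroup M] [Module A M] {ℳ : ℤ → AddSubgroup M}
variable [DirectSum.Decomposition ℳ]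

/-- Projection onto the `n`-th graded piece, as a bare function. -/
noncomputable def mproj (ℳ : ℤ → AddSubgroup M) [DirectSum.Decomposition ℳ] (n : ℤ)
    (x : M) : M :=
  (decompose ℳ x n : M)

lemma mproj_mem (n : ℤ) (x : M) : mproj ℳ n x ∈ ℳ n := SetLike.coe_mem _

lemma mproj_add (n : ℤ) (x y : M) :
    mproj ℳ n (x + y) = mproj ℳ n x + mproj ℳ n y := by
  unfold mproj
  rw [DirectSum.decompose_add, DirectSum.add_apply]
  rfl

lemma mproj_zero (n : ℤ) : mproj ℳ n (0 : M) = 0 := by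
  unfold mproj; rw [DirectSum.decompose_zero]; rfl

lemma mproj_same {n : ℤ} {x : M} (hx : x ∈ ℳ n) : mproj ℳ n x = x :=
  DirectSum.decompose_of_mem_same ℳ hx

lemma mproj_ne {m n : ℤ} {x : M} (hx : x ∈ ℳ m) (h : m ≠ n) : mproj ℳ n x = 0 :=
  DirectSum.decompose_of_mem_ne ℳ hx h

lemma mproj_finset_sum {ι : Type*} (F : Finset ι) (f : ι → M) (n : ℤ) :
    mproj ℳ n (∑ i ∈ F, f i) = ∑ i ∈ F, mproj ℳ n (f i) := by
  classical
  induction F using Finset.induction with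
  | empty => simp [mproj_zero]
  | insert _ _ hni ih =>
      rw [Finset.sum_insert hni, Finset.sum_insert hni, mproj_add, ih]

lemma mproj_spec (x : M) :
    ∃ F : Finset ℤ, (∀ n ∉ F, mproj ℳ n x = 0) ∧ (∑ n ∈ F, mproj ℳ n x) = x := by
  classical
  refine ⟨(decompose ℳ x).support, fun n hn => ?_, ?_⟩
  · unfold mproj
    rw [DFinsupp.notMem_support_iff.mp hn]
    rfl
  · exact DirectSum.sum_support_decompose ℳ x

lemma mproj_smul (hsmul : ∀ (i j : ℤ), ∀ a ∈ 𝒜 i, ∀ x ∈ ℳ j, a • x ∈ ℳ (i + j))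
    {e : ℤ} {y : M} (hy : y ∈ ℳ e) (c : A) (d : ℤ) :
    mproj ℳ d (c • y) = (decompose 𝒜 c (d - e) : A) • y := by
  induction c using DirectSum.Decomposition.inductionOn 𝒜 with
  | zero => simp [mproj_zero]
  | homogeneous cc =>
      rename_i m
      obtain ⟨c, hc⟩ := cc
      simp only []
      have hcy : c • y ∈ ℳ (m + e) := hsmul m e c hc y hy
      by_cases h : d = m + e
      · rw [mproj_same (show c • y ∈ ℳ d from h ▸ hcy),
          DirectSum.decompose_of_mem_same 𝒜 (show c ∈ 𝒜 (d - e) from by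
            rw [show d - e = m by omega]; exact hc)]
      · rw [mproj_ne hcy (by omega),
          DirectSum.decompose_of_mem_ne 𝒜 hc (show m ≠ d - e by omega), zero_smul]
  | add c₁ c₂ h₁ h₂ =>
      rw [add_smul, mproj_add, h₁, h₂, decompose_coe_add, add_smul]

lemma mproj_naturality {N : Type*} [AddCommGroup N] [Module A N]
    {𝒩 : ℤ → AddSubgroup N} [DirectSum.Decomposition 𝒩]
    (f : M →ₗ[A] N) (hf : ∀ n : ℤ, ∀ x ∈ ℳ n, f x ∈ 𝒩 n) (n : ℤ) (x : M) :
    f (mproj ℳ n x) = mproj 𝒩 n (f x) := by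
  induction x using DirectSum.Decomposition.inductionOn ℳ with
  | zero => simp [mproj_zero]
  | homogeneous xx =>
      rename_i j
      obtain ⟨x, hx⟩ := xx
      simp only []
      by_cases h : j = n
      · subst h
        rw [mproj_same hx, mproj_same (hf _ _ hx)]
      · rw [mproj_ne hx h, mproj_ne (hf _ _ hx) h, map_zero]
  | add x y hx hy =>
      rw [mproj_add, map_add, map_add, mproj_add, hx, hy]

lemma engine (SF : SemiFrame 𝒜)
    (hsmul : ∀ (i j : ℤ), ∀ a ∈ 𝒜 i, ∀ x ∈ ℳ j, a • x ∈ ℳ (i + j))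
    (W : Submodule A M) (hW : ∀ x ∈ W, ∀ n, mproj ℳ n x ∈ W) :
    ∀ (k : ℕ) (s : Finset M), s.card ≤ k → (∀ x ∈ s, ∃ n, x ∈ ℳ n) →
      Submodule.span A (s : Set M) ≤ W ⊔ kerNu 𝒜 SF.tau • Submodule.span A (s : Set M) →
      Submodule.span A (s : Set M) ≤ W := by
  intro k
  induction k with
  | zero =>
      intro s hcard _ _
      have : s = ∅ := Finset.card_eq_zero.mp (by omega)
      simp [this]
  | succ k IH =>
      intro s hcard hhom hle
      rcases Finset.eq_empty_or_nonempty s with rfl | ⟨x, hxs⟩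
      · simp
      classical
      choose D hD using fun i : {y // y ∈ s} => hhom i i.2
      set I := kerNu 𝒜 SF.tau with hI
      set ix : {y // y ∈ s} := ⟨x, hxs⟩ with hix
      set d := D ix with hd
      -- decompose x as an element of W ⊔ I • span s
      have hx' := hle (Submodule.subset_span hxs)
      rw [Submodule.mem_sup] at hx'
      obtain ⟨w, hw, q, hq, hwq⟩ := hx'
      have hrange : Set.range (fun i : {y // y ∈ s} => (i : M)) = (s : Set M) :=
        Subtype.range_coe
      rw [show Submodule.span A (s : Set M)
            = Submodule.span A (Set.range (fun i : {y // y ∈ s} => (i : M))) by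
          rw [hrange]] at hq
      obtain ⟨a, ha, hasum⟩ :=
        (Submodule.mem_ideal_smul_span_iff_exists_sum I _ q).mp hq
      -- project everything to degree d
      set b : {y // y ∈ s} → A := fun i => (decompose 𝒜 (a i) (d - D i) : A) with hb
      have hprojq : mproj ℳ d q = ∑ i ∈ a.support, b i • (i : M) := by
        rw [← hasum, Finsupp.sum, mproj_finset_sum]
        exact Finset.sum_congr rfl fun i _ => mproj_smul hsmul (hD i) (a i) d
      have hsum_univ : ∑ i ∈ a.support, b i • (i : M)
          = ∑ i ∈ Finset.univ, b i • (i : M) := by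
        refine Finset.sum_subset (Finset.subset_univ _) fun i _ hi => ?_
        have hai : a i = 0 := Finsupp.notMem_support_iff.mp hi
        simp [hb, hai]
      have hxd : x = mproj ℳ d w + (b ix • x + ∑ i ∈ Finset.univ.erase ix, b i • (i : M)) := by
        have h0 : mproj ℳ d x = x := mproj_same (hD ix)
        calc x = mproj ℳ d x := h0.symm
          _ = mproj ℳ d (w + q) := by rw [hwq]
          _ = mproj ℳ d w + mproj ℳ d q := mproj_add _ _ _
          _ = mproj ℳ d w + ∑ i ∈ Finset.univ, b i • (i : M) := by
              rw [hprojq, hsum_univ]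
          _ = mproj ℳ d w + (b ix • x + ∑ i ∈ Finset.univ.erase ix, b i • (i : M)) := by
              rw [← Finset.add_sum_erase _ _ (Finset.mem_univ ix)]
      -- the coefficient of x is 1 - (unit)
      have hbI : b ix ∈ I := kerNu_isHomogeneous SF _ (ha ix)
      have hb0 : b ix ∈ 𝒜 0 := by
        rw [show b ix = ((decompose 𝒜 (a ix)) (D ix - D ix) : A) from rfl, sub_self]
        exact SetLike.coe_mem _
      obtain ⟨z, hz⟩ := kerNu_one_sub_unit SF hbI hb0
      -- x lies in W ⊔ span (s.erase x)
      have h1 : (1 - b ix) • x ∈ W ⊔ Submodule.span A ((s.erase x : Finset M) : Set M) := by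
        have : (1 - b ix) • x = mproj ℳ d w + ∑ i ∈ Finset.univ.erase ix, b i • (i : M) := by
          rw [sub_smul, one_smul]
          nth_rewrite 1 [hxd]
          abel
        rw [this]
        refine Submodule.add_mem _ (Submodule.mem_sup_left (hW w hw d)) ?_
        refine Submodule.sum_mem _ fun i hi => Submodule.mem_sup_right ?_
        refine Submodule.smul_mem _ _ (Submodule.subset_span ?_)
        have hine : i ≠ ix := (Finset.mem_erase.mp hi).1
        simp only [Finset.coe_erase, Set.mem_diff, Set.mem_singleton_iff]
        exact ⟨i.2, fun h => hine (Subtype.ext h)⟩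
      have hxW : x ∈ W ⊔ Submodule.span A ((s.erase x : Finset M) : Set M) := by
        have h2 := Submodule.smul_mem _ z h1
        rwa [smul_smul, mul_comm, hz, one_smul] at h2
      have hspan_le : Submodule.span A (s : Set M)
          ≤ W ⊔ Submodule.span A ((s.erase x : Finset M) : Set M) := by
        rw [Submodule.span_le]
        intro y hy
        by_cases hyx : y = x
        · subst hyx; exact hxW
        · refine Submodule.mem_sup_right (Submodule.subset_span ?_)
          simp only [Finset.coe_erase, Set.mem_diff, Set.mem_singleton_iff]
          exact ⟨hy, hyx⟩
      have herase : Submodule.span A ((s.erase x : Finset M) : Set M) ≤ W := by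
        refine IH (s.erase x) ?_ (fun y hy => hhom y (Finset.erase_subset _ _ hy)) ?_
        · have := Finset.card_erase_of_mem hxs
          have hpos : 0 < s.card := Finset.card_pos.mpr ⟨x, hxs⟩
          omega
        · have hstep : Submodule.span A ((s.erase x : Finset M) : Set M)
              ≤ W ⊔ I • Submodule.span A (s : Set M) :=
            le_trans (Submodule.span_mono (by
              exact_mod_cast Finset.coe_subset.mpr (Finset.erase_subset _ _))) hle
          have hsmul_le : I • Submodule.span A (s : Set M)
              ≤ W ⊔ I • Submodule.span A ((s.erase x : Finset M) : Set M) := by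
            calc I • Submodule.span A (s : Set M)
                ≤ I • (W ⊔ Submodule.span A ((s.erase x : Finset M) : Set M)) :=
                  Submodule.smul_mono le_rfl hspan_le
              _ ≤ I • W ⊔ I • Submodule.span A ((s.erase x : Finset M) : Set M) := by
                  rw [Submodule.smul_sup]
              _ ≤ W ⊔ I • Submodule.span A ((s.erase x : Finset M) : Set M) :=
                  sup_le_sup_right Submodule.smul_le_right _
          refine le_trans hstep ?_
          refine sup_le le_sup_left ?_
          exact le_trans hsmul_le le_rfl
      exact le_trans hspan_le (sup_le le_rfl herase)

lemma graded_nakayama (SF : SemiFrame 𝒜)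
    (hsmul : ∀ (i j : ℤ), ∀ a ∈ 𝒜 i, ∀ x ∈ ℳ j, a • x ∈ ℳ (i + j))
    (V W : Submodule A M) (hVfg : V.FG)
    (hV : ∀ x ∈ V, ∀ n, mproj ℳ n x ∈ V)
    (hW : ∀ x ∈ W, ∀ n, mproj ℳ n x ∈ W)
    (hle : V ≤ W ⊔ kerNu 𝒜 SF.tau • V) : V ≤ W := by
  classical
  obtain ⟨s₀, hs₀⟩ := hVfg
  set s : Finset M := s₀.biUnion (fun x =>
    (Classical.choose (mproj_spec (ℳ := ℳ) x)).image (fun n => mproj ℳ n x)) with hs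
  have hsubV : (s : Set M) ⊆ (V : Set M) := by
    intro y hy
    rw [hs] at hy
    simp only [Finset.coe_biUnion, Set.mem_iUnion, Finset.mem_coe, Finset.mem_image] at hy
    obtain ⟨x, hx, n, _, rfl⟩ := hy
    exact hV x (hs₀ ▸ Submodule.subset_span hx) n
  have hspan : Submodule.span A (s : Set M) = V := by
    refine le_antisymm (Submodule.span_le.mpr hsubV) ?_
    rw [← hs₀, Submodule.span_le]
    intro x hx
    have hsp := Classical.choose_spec (mproj_spec (ℳ := ℳ) x)
    rw [show x = ∑ n ∈ Classical.choose (mproj_spec (ℳ := ℳ) x), mproj ℳ n x from hsp.2.symm]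
    refine Submodule.sum_mem _ fun n hn => Submodule.subset_span ?_
    rw [hs]
    simp only [Finset.coe_biUnion, Set.mem_iUnion, Finset.mem_coe, Finset.mem_image]
    exact ⟨x, hx, n, hn, rfl⟩
  have hhom : ∀ y ∈ s, ∃ n, y ∈ ℳ n := by
    intro y hy
    rw [hs] at hy
    simp only [Finset.mem_biUnion, Finset.mem_image] at hy
    obtain ⟨x, _, n, _, rfl⟩ := hy
    exact ⟨n, mproj_mem n x⟩
  have := engine SF hsmul W hW s.card s le_rfl hhom (by rw [hspan]; exact hle)
  rwa [hspan] at this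

end ModuleGrading

section Tensor

open TensorProduct

lemma smul_top_of_subsingleton_baseChange
    {A : Type u} [CommRing A] {A' : Type v} [CommRing A'] [Algebra A A']
    (I : Ideal A) (I' : Ideal A')
    [Algebra (A ⧸ I) (A' ⧸ I')]
    (hq : ∀ a : A, algebraMap (A ⧸ I) (A' ⧸ I') (Ideal.Quotient.mk I a)
        = Ideal.Quotient.mk I' (algebraMap A A' a))
    [Module.FaithfullyFlat (A ⧸ I) (A' ⧸ I')]
    (C : Type u) [AddCommGroup C] [Module A C]
    (h : Subsingleton (A' ⊗[A] C)) :
    I • (⊤ : Submodule A C) = ⊤ := by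
  haveI : IsScalarTower A (A ⧸ I) (A' ⧸ I') := IsScalarTower.of_algebraMap_eq (fun a => by
    rw [Ideal.Quotient.algebraMap_eq, hq a]
    rfl)
  -- step 1 : (A'⧸I') ⊗[A] C is subsingleton
  have hsurj : Function.Surjective
      (LinearMap.rTensor C ((Algebra.linearMap A' (A' ⧸ I')).restrictScalars A)) :=
    LinearMap.rTensor_surjective C (g := (Algebra.linearMap A' (A' ⧸ I')).restrictScalars A)
      Ideal.Quotient.mk_surjective
  haveI h1 : Subsingleton ((A' ⧸ I') ⊗[A] C) := hsurj.subsingleton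
  -- step 2 : transfer along cancelBaseChange
  haveI h2 : Subsingleton ((A' ⧸ I') ⊗[A ⧸ I] ((A ⧸ I) ⊗[A] C)) :=
    (TensorProduct.AlgebraTensorModule.cancelBaseChange A (A ⧸ I) (A ⧸ I) (A' ⧸ I')
      C).toEquiv.injective.subsingleton
  haveI h3 : Subsingleton (((A ⧸ I) ⊗[A] C) ⊗[A ⧸ I] (A' ⧸ I')) :=
    (TensorProduct.comm (A ⧸ I) _ _).toEquiv.injective.subsingleton
  -- step 3 : faithful flatness
  haveI h4 : Subsingleton ((A ⧸ I) ⊗[A] C) :=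
    Module.FaithfullyFlat.rTensor_reflects_triviality (A ⧸ I) (A' ⧸ I') _
  -- step 4 : quotient description
  haveI h5 : Subsingleton (C ⧸ (I • (⊤ : Submodule A C))) :=
    (TensorProduct.quotTensorEquivQuotSMul C I).symm.toEquiv.injective.subsingleton
  exact Submodule.Quotient.subsingleton_iff.mp h5

end Tensor

section Main

open TensorProduct

lemma baseChange_zero' {R M N A : Type*} [CommRing R] [CommRing A] [Algebra R A]
    [AddCommGroup M] [Module R M] [AddCommGroup N] [Module R N] :
    (0 : M →ₗ[R] N).baseChange A = 0 := by
  ext; simp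


/-- **Statement 11.** Let `(S, τ)` be a semi-frame for `R`, `(S', τ')` a semi-frame
for `R'`, and `φ : S → S'` a homomorphism of graded rings with `τ' ∘ φ = φ ∘ τ`, so
that `φ` induces a ring homomorphism `R → R'`; assume `R → R'` is faithfully flat.
Let `0 → M → N → P → 0` be a complex of finite projective graded `S`-modules.  Then
the complex is exact if and only if its base change
`0 → M ⊗_S S' → N ⊗_S S' → P ⊗_S S' → 0` along `φ` is exact.

Here `φ` is packaged as the algebra map of an `S`-algebra structure on `S'`, the
induced map `R = S⧸ker ν → R' = S'⧸ker ν'` as the algebra map of an `R`-algebra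
structure on `R'`, and exactness is injectivity + (range = kernel) + surjectivity. -/
theorem gradedComplex_exact_iff_baseChange_exact
    {A : Type u} [CommRing A] (𝒜 : ℤ → AddSubgroup A) [GradedRing 𝒜]
    (SF : SemiFrame 𝒜)
    {A' : Type v} [CommRing A'] (𝒜' : ℤ → AddSubgroup A') [GradedRing 𝒜']
    (SF' : SemiFrame 𝒜')
    [Algebra A A']
    (hφgraded : ∀ n : ℤ, ∀ a ∈ 𝒜 n, algebraMap A A' a ∈ 𝒜' n)
    (hφcomm : ∀ a : A, SF'.tau (algebraMap A A' a) = algebraMap A A' (SF.tau a))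
    -- the induced ring homomorphism `R → R'` …
    [Algebra (A ⧸ kerNu 𝒜 SF.tau) (A' ⧸ kerNu 𝒜' SF'.tau)]
    (hquot : ∀ a : A,
      algebraMap (A ⧸ kerNu 𝒜 SF.tau) (A' ⧸ kerNu 𝒜' SF'.tau)
          (Ideal.Quotient.mk (kerNu 𝒜 SF.tau) a)
        = Ideal.Quotient.mk (kerNu 𝒜' SF'.tau) (algebraMap A A' a))
    -- … is faithfully flat:
    [Module.FaithfullyFlat (A ⧸ kerNu 𝒜 SF.tau) (A' ⧸ kerNu 𝒜' SF'.tau)]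
    -- a complex `0 → M → N → P → 0` of finite projective graded `S`-modules:
    {M : Type u} [AddCommGroup M] [Module A M]
    (ℳ : ℤ → AddSubgroup M) (hMint : DirectSum.IsInternal ℳ)
    (hMsmul : ∀ (i j : ℤ), ∀ a ∈ 𝒜 i, ∀ x ∈ ℳ j, a • x ∈ ℳ (i + j))
    [Module.Finite A M] [Module.Projective A M]
    {N : Type u} [AddCommGroup N] [Module A N]
    (𝒩 : ℤ → AddSubgroup N) (hNint : DirectSum.IsInternal 𝒩)
    (hNsmul : ∀ (i j : ℤ), ∀ a ∈ 𝒜 i, ∀ x ∈ 𝒩 j, a • x ∈ 𝒩 (i + j))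
    [Module.Finite A N] [Module.Projective A N]
    {P : Type u} [AddCommGroup P] [Module A P]
    (𝒬 : ℤ → AddSubgroup P) (hPint : DirectSum.IsInternal 𝒬)
    (hPsmul : ∀ (i j : ℤ), ∀ a ∈ 𝒜 i, ∀ x ∈ 𝒬 j, a • x ∈ 𝒬 (i + j))
    [Module.Finite A P] [Module.Projective A P]
    (f : M →ₗ[A] N) (hfgraded : ∀ n : ℤ, ∀ x ∈ ℳ n, f x ∈ 𝒩 n)
    (g : N →ₗ[A] P) (hggraded : ∀ n : ℤ, ∀ x ∈ 𝒩 n, g x ∈ 𝒬 n)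
    (hcomplex : ∀ x : M, g (f x) = 0) :
    (Function.Injective f ∧ LinearMap.range f = LinearMap.ker g ∧
        Function.Surjective g) ↔
      (Function.Injective (LinearMap.baseChange A' f) ∧
        LinearMap.range (LinearMap.baseChange A' f)
          = LinearMap.ker (LinearMap.baseChange A' g) ∧
        Function.Surjective (LinearMap.baseChange A' g)) := by
  classical
  haveI decM : DirectSum.Decomposition ℳ := hMint.chooseDecomposition
  haveI decN : DirectSum.Decomposition 𝒩 := hNint.chooseDecomposition
  haveI decP : DirectSum.Decomposition 𝒬 := hPint.chooseDecomposition
  have gf0 : g ∘ₗ f = 0 := by ext x; simp [hcomplex x]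
  have hker_bc : ∀ y : A' ⊗[A] M,
      LinearMap.baseChange A' g (LinearMap.baseChange A' f y) = 0 := by
    intro y
    rw [← LinearMap.comp_apply, ← LinearMap.baseChange_comp, gf0, baseChange_zero']
    rfl
  constructor
  · -- forward: exactness descends to any base change since the sequence splits
    rintro ⟨hfinj, hrange, hgsurj⟩
    obtain ⟨s, hgs⟩ := Module.projective_lifting_property g LinearMap.id hgsurj
    have hgs' : ∀ y, g (s y) = y := fun y => congrFun (congrArg DFunLike.coe hgs) y
    have hfk : ∀ x, f x ∈ LinearMap.ker g := fun x => by
      simp [LinearMap.mem_ker, hcomplex x]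
    set f₀ : M →ₗ[A] LinearMap.ker g := LinearMap.codRestrict _ f hfk with hf₀
    have hf₀bij : Function.Bijective f₀ := by
      constructor
      · intro x y hxy
        exact hfinj (congrArg ((LinearMap.ker g).subtype) hxy)
      · rintro ⟨y, hy⟩
        rw [← hrange] at hy
        obtain ⟨x, hx⟩ := hy
        exact ⟨x, Subtype.ext hx⟩
    set e := LinearEquiv.ofBijective f₀ hf₀bij with he
    set σ : N →ₗ[A] N := LinearMap.id - s ∘ₗ g with hσ
    have hσ' : ∀ y : N, σ y = y - s (g y) := fun y => by
      rw [hσ]; simp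
    have hπmem : ∀ y : N, σ y ∈ LinearMap.ker g := fun y => by
      rw [LinearMap.mem_ker, hσ' y, map_sub, hgs', sub_self]
    set π : N →ₗ[A] LinearMap.ker g :=
      LinearMap.codRestrict _ σ hπmem with hπ
    set r : N →ₗ[A] M := (e.symm : LinearMap.ker g →ₗ[A] M) ∘ₗ π with hr
    have hrf : r ∘ₗ f = LinearMap.id := by
      ext x
      have h1 : π (f x) = f₀ x := by
        apply Subtype.ext
        show σ (f x) = f x
        rw [hσ' (f x), hcomplex x, map_zero, sub_zero]
      show e.symm (π (f x)) = x
      rw [h1]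
      exact e.symm_apply_apply x
    have hfr : ∀ y, f (r y) = y - s (g y) := fun y => by
      have h1 : f₀ (r y) = π y := e.apply_symm_apply (π y)
      have h2 := congrArg ((LinearMap.ker g).subtype) h1
      rwa [show ((LinearMap.ker g).subtype) (π y) = σ y from rfl, hσ' y] at h2
    refine ⟨?_, ?_, ?_⟩
    · have hcomp : (LinearMap.baseChange A' r) ∘ₗ (LinearMap.baseChange A' f)
          = LinearMap.id := by
        rw [← LinearMap.baseChange_comp, hrf, LinearMap.baseChange_id]
      intro x y hxy
      have h2 := congrArg (LinearMap.baseChange A' r) hxy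
      rwa [← LinearMap.comp_apply, ← LinearMap.comp_apply, hcomp,
        LinearMap.id_apply, LinearMap.id_apply] at h2
    · apply le_antisymm
      · rintro _ ⟨x, rfl⟩
        exact LinearMap.mem_ker.mpr (hker_bc x)
      · intro y hy
        rw [LinearMap.mem_ker] at hy
        have hid : f ∘ₗ r + s ∘ₗ g = LinearMap.id := by
          ext z
          simp [hfr z]
        have h3 : LinearMap.baseChange A' (f ∘ₗ r) + LinearMap.baseChange A' (s ∘ₗ g)
            = LinearMap.id := by
          rw [← LinearMap.baseChange_add, hid, LinearMap.baseChange_id]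
        have h4 := congrFun (congrArg DFunLike.coe h3) y
        simp only [LinearMap.add_apply, LinearMap.id_apply] at h4
        simp only [LinearMap.baseChange_comp, LinearMap.comp_apply] at h4
        rw [hy, map_zero, add_zero] at h4
        exact ⟨_, h4⟩
    · intro y
      refine ⟨LinearMap.baseChange A' s y, ?_⟩
      rw [← LinearMap.comp_apply, ← LinearMap.baseChange_comp, hgs,
        LinearMap.baseChange_id, LinearMap.id_apply]
  · rintro ⟨hfinj', hrange', hgsurj'⟩
    -- ========== step (a) : g is surjective ==========
    have hgsurj : Function.Surjective g := by
      set W₁ := LinearMap.range g with hW₁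
      have hmkg : W₁.mkQ ∘ₗ g = 0 := by
        ext z
        simp [hW₁]
      have hsub1 : Subsingleton (A' ⊗[A] (P ⧸ W₁)) := by
        refine subsingleton_of_forall_eq 0 fun γ => ?_
        have hmq : Function.Surjective (LinearMap.baseChange A' W₁.mkQ) := by
          rw [LinearMap.baseChange_eq_ltensor]
          exact LinearMap.lTensor_surjective _ (Submodule.mkQ_surjective _)
        obtain ⟨x, rfl⟩ := hmq γ
        obtain ⟨y, rfl⟩ := hgsurj' x
        rw [← LinearMap.comp_apply, ← LinearMap.baseChange_comp, hmkg, baseChange_zero']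
        rfl
      have hsmul1 : kerNu 𝒜 SF.tau • (⊤ : Submodule A (P ⧸ W₁)) = ⊤ :=
        smul_top_of_subsingleton_baseChange (kerNu 𝒜 SF.tau) (kerNu 𝒜' SF'.tau) hquot _ hsub1
      have hsup1 : (⊤ : Submodule A P) ≤ W₁ ⊔ kerNu 𝒜 SF.tau • (⊤ : Submodule A P) := by
        have h1 : (⊤ : Submodule A (P ⧸ W₁)) = Submodule.map W₁.mkQ (kerNu 𝒜 SF.tau • ⊤) := by
          rw [← hsmul1, Submodule.map_smul'', Submodule.map_top, Submodule.range_mkQ]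
        have h2 := congrArg (Submodule.comap W₁.mkQ) h1
        rw [Submodule.comap_top, Submodule.comap_map_eq, Submodule.ker_mkQ] at h2
        calc (⊤ : Submodule A P) = kerNu 𝒜 SF.tau • ⊤ ⊔ W₁ := h2
          _ ≤ W₁ ⊔ kerNu 𝒜 SF.tau • ⊤ := le_of_eq (sup_comm _ _)
      have htop : (⊤ : Submodule A P) ≤ W₁ := by
        refine graded_nakayama (ℳ := 𝒬) SF hPsmul ⊤ W₁ (Module.Finite.fg_top)
          (fun x _ n => trivial) ?_ hsup1
        rintro x ⟨y, rfl⟩ n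
        exact ⟨mproj 𝒩 n y, mproj_naturality g hggraded n y⟩
      rw [← LinearMap.range_eq_top, ← hW₁]
      exact top_le_iff.mp htop
    -- ========== step (b) : splitting of g ==========
    obtain ⟨sP, hgs⟩ := Module.projective_lifting_property g LinearMap.id hgsurj
    have hgs' : ∀ y, g (sP y) = y := fun y => congrFun (congrArg DFunLike.coe hgs) y
    set K := LinearMap.ker g with hKdef
    have hfk : ∀ x, f x ∈ K := fun x => by
      simp [hKdef, LinearMap.mem_ker, hcomplex x]
    set f₀ : M →ₗ[A] K := LinearMap.codRestrict _ f hfk with hf₀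
    have hval : ∀ x, (f₀ x : N) = f x := fun x => rfl
    set σ : N →ₗ[A] N := LinearMap.id - sP ∘ₗ g with hσ
    have hσ' : ∀ y : N, σ y = y - sP (g y) := fun y => by rw [hσ]; simp
    have hσmem : ∀ y : N, σ y ∈ K := fun y => by
      rw [hKdef, LinearMap.mem_ker, hσ' y, map_sub, hgs', sub_self]
    set π : N →ₗ[A] K := LinearMap.codRestrict _ σ hσmem with hπ
    have hπsub : π ∘ₗ K.subtype = LinearMap.id := by
      ext k
      show σ (k : N) = (k : N)
      rw [hσ' _, show g (k : N) = 0 from k.2, map_zero, sub_zero]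
    have hgsub : g ∘ₗ K.subtype = 0 := by
      ext k
      exact k.2
    have hfcomp : K.subtype ∘ₗ f₀ = f := by ext x; rfl
    have hbcsub_inj : Function.Injective (LinearMap.baseChange A' K.subtype) := by
      intro x y hxy
      have h2 := congrArg (LinearMap.baseChange A' π) hxy
      rwa [← LinearMap.comp_apply, ← LinearMap.comp_apply, ← LinearMap.baseChange_comp,
        hπsub, LinearMap.baseChange_id, LinearMap.id_apply, LinearMap.id_apply] at h2
    -- ========== step (c) : range f = ker g ==========
    have hrange : LinearMap.range f = K := by
      set W₂ := LinearMap.range f₀ with hW₂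
      have hmkf : W₂.mkQ ∘ₗ f₀ = 0 := by
        ext z
        simp [hW₂]
      have hsub2 : Subsingleton (A' ⊗[A] (K ⧸ W₂)) := by
        refine subsingleton_of_forall_eq 0 fun γ => ?_
        have hmq : Function.Surjective (LinearMap.baseChange A' W₂.mkQ) := by
          rw [LinearMap.baseChange_eq_ltensor]
          exact LinearMap.lTensor_surjective _ (Submodule.mkQ_surjective _)
        obtain ⟨x, rfl⟩ := hmq γ
        have h1 : LinearMap.baseChange A' g (LinearMap.baseChange A' K.subtype x) = 0 := by
          rw [← LinearMap.comp_apply, ← LinearMap.baseChange_comp, hgsub, baseChange_zero']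
          rfl
        have h2 : LinearMap.baseChange A' K.subtype x
            ∈ LinearMap.range (LinearMap.baseChange A' f) := by
          rw [hrange']
          exact LinearMap.mem_ker.mpr h1
        obtain ⟨y, hy⟩ := h2
        have h3 : LinearMap.baseChange A' K.subtype (LinearMap.baseChange A' f₀ y)
            = LinearMap.baseChange A' K.subtype x := by
          rw [← LinearMap.comp_apply, ← LinearMap.baseChange_comp, hfcomp]
          exact hy
        have h4 : LinearMap.baseChange A' f₀ y = x := hbcsub_inj h3
        rw [← h4, ← LinearMap.comp_apply, ← LinearMap.baseChange_comp, hmkf,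
          baseChange_zero']
        rfl
      have hsmul2 : kerNu 𝒜 SF.tau • (⊤ : Submodule A (K ⧸ W₂)) = ⊤ :=
        smul_top_of_subsingleton_baseChange (kerNu 𝒜 SF.tau) (kerNu 𝒜' SF'.tau) hquot _ hsub2
      have hsup2 : (⊤ : Submodule A K) ≤ W₂ ⊔ kerNu 𝒜 SF.tau • (⊤ : Submodule A K) := by
        have h1 : (⊤ : Submodule A (K ⧸ W₂)) = Submodule.map W₂.mkQ (kerNu 𝒜 SF.tau • ⊤) := by
          rw [← hsmul2, Submodule.map_smul'', Submodule.map_top, Submodule.range_mkQ]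
        have h2 := congrArg (Submodule.comap W₂.mkQ) h1
        rw [Submodule.comap_top, Submodule.comap_map_eq, Submodule.ker_mkQ] at h2
        calc (⊤ : Submodule A K) = kerNu 𝒜 SF.tau • ⊤ ⊔ W₂ := h2
          _ ≤ W₂ ⊔ kerNu 𝒜 SF.tau • ⊤ := le_of_eq (sup_comm _ _)
      -- push down to N along K.subtype
      have hmap := congrArg (Submodule.map K.subtype) (top_le_iff.mp hsup2)
      rw [Submodule.map_sup, Submodule.map_smul'', Submodule.map_top,
        Submodule.range_subtype] at hmap
      have hmapW₂ : Submodule.map K.subtype W₂ = LinearMap.range f := by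
        rw [hW₂, ← LinearMap.range_comp, hfcomp]
      rw [hmapW₂] at hmap
      -- hmap : range f ⊔ kerNu 𝒜 SF.tau • K = K
      have hKfg : K.FG := by
        have hKr : K = LinearMap.range σ := by
          apply le_antisymm
          · intro y hy
            refine ⟨y, ?_⟩
            rw [hσ' y, show g y = 0 from hy, map_zero, sub_zero]
          · rintro _ ⟨y, rfl⟩
            exact hσmem y
        rw [hKr, LinearMap.range_eq_map]
        exact Submodule.FG.map _ (Module.Finite.fg_top)
      have hKle : K ≤ LinearMap.range f := by
        refine graded_nakayama (ℳ := 𝒩) SF hNsmul K (LinearMap.range f) hKfg ?_ ?_ ?_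
        · intro x hx n
          rw [hKdef, LinearMap.mem_ker] at hx ⊢
          rw [mproj_naturality g hggraded n x, hx, mproj_zero]
        · rintro x ⟨y, rfl⟩ n
          exact ⟨mproj ℳ n y, mproj_naturality f hfgraded n y⟩
        · exact le_of_eq hmap.symm
      refine le_antisymm ?_ hKle
      rintro _ ⟨x, rfl⟩
      exact hfk x
    -- ========== step (d) : f injective ==========
    have hf₀surj : Function.Surjective f₀ := by
      intro k
      have hk : (k : N) ∈ LinearMap.range f := by rw [hrange]; exact k.2
      obtain ⟨x, hx⟩ := hk
      exact ⟨x, Subtype.ext hx⟩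
    haveI hKproj : Module.Projective A K := Module.Projective.of_split K.subtype π hπsub
    obtain ⟨t, hft⟩ := Module.projective_lifting_property f₀ LinearMap.id hf₀surj
    have hft' : ∀ k, f₀ (t k) = k := fun k => congrFun (congrArg DFunLike.coe hft) k
    set Kf := LinearMap.ker f with hKf
    have hker_eq : ∀ x : M, f x = 0 ↔ f₀ x = 0 := fun x =>
      ⟨fun h => Subtype.ext (by rw [hval, h]; rfl), fun h => by rw [← hval, h]; rfl⟩
    set σ₂ : M →ₗ[A] M := LinearMap.id - t ∘ₗ f₀ with hσ₂
    have hσ₂' : ∀ x : M, σ₂ x = x - t (f₀ x) := fun x => by rw [hσ₂]; simp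
    have hσ₂mem : ∀ x : M, σ₂ x ∈ Kf := fun x => by
      rw [hKf, LinearMap.mem_ker, hker_eq, hσ₂' x, map_sub, hft', sub_self]
    set π₂ : M →ₗ[A] Kf := LinearMap.codRestrict _ σ₂ hσ₂mem with hπ₂
    have hπ₂sub : π₂ ∘ₗ Kf.subtype = LinearMap.id := by
      ext w
      show σ₂ (w : M) = (w : M)
      have hw : f₀ (w : M) = 0 := (hker_eq _).mp w.2
      rw [hσ₂' _, hw, map_zero, sub_zero]
    have hfsub : f ∘ₗ Kf.subtype = 0 := by
      ext w
      exact w.2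
    have hsub3 : Subsingleton (A' ⊗[A] Kf) := by
      refine subsingleton_of_forall_eq 0 fun γ => ?_
      have h1 : LinearMap.baseChange A' f (LinearMap.baseChange A' Kf.subtype γ) = 0 := by
        rw [← LinearMap.comp_apply, ← LinearMap.baseChange_comp, hfsub, baseChange_zero']
        rfl
      have h2 : LinearMap.baseChange A' Kf.subtype γ = 0 := by
        apply hfinj'
        rw [h1, map_zero]
      calc γ = LinearMap.baseChange A' π₂ (LinearMap.baseChange A' Kf.subtype γ) := by
              rw [← LinearMap.comp_apply, ← LinearMap.baseChange_comp, hπ₂sub,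
                LinearMap.baseChange_id, LinearMap.id_apply]
        _ = 0 := by rw [h2, map_zero]
    have hsmul3 : kerNu 𝒜 SF.tau • (⊤ : Submodule A Kf) = ⊤ :=
      smul_top_of_subsingleton_baseChange (kerNu 𝒜 SF.tau) (kerNu 𝒜' SF'.tau) hquot _ hsub3
    have h3 : kerNu 𝒜 SF.tau • Kf = Kf := by
      have := congrArg (Submodule.map Kf.subtype) hsmul3
      rwa [Submodule.map_smul'', Submodule.map_top, Submodule.range_subtype] at this
    have hKffg : Kf.FG := by
      have hKr : Kf = LinearMap.range σ₂ := by
        apply le_antisymm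
        · intro y hy
          refine ⟨y, ?_⟩
          have hy0 : f₀ y = 0 := (hker_eq y).mp hy
          rw [hσ₂' y, hy0, map_zero, sub_zero]
        · rintro _ ⟨y, rfl⟩
          exact hσ₂mem y
      rw [hKr, LinearMap.range_eq_map]
      exact Submodule.FG.map _ (Module.Finite.fg_top)
    have hKfle : Kf ≤ ⊥ := by
      refine graded_nakayama (ℳ := ℳ) SF hMsmul Kf ⊥ hKffg ?_ ?_ ?_
      · intro x hx n
        rw [hKf, LinearMap.mem_ker] at hx ⊢
        rw [mproj_naturality f hfgraded n x, hx, mproj_zero]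
      · intro x hx n
        rw [Submodule.mem_bot] at hx ⊢
        rw [hx, mproj_zero]
      · rw [bot_sup_eq, h3]
    have hfinj : Function.Injective f :=
      LinearMap.ker_eq_bot.mp (le_bot_iff.mp hKfle)
    exact ⟨hfinj, hrange, hgsurj⟩
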